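/- Let G1 be a torsion group, G2 a group, and φ : G1 → G2 a bijection such that a multiset over G1 is a product-one sequence over G1 if and only if its termwise image under φ is a product-one sequence over G2. Then for every g1 in G1, either φ(g1 x) = φ(x) φ(g1) for all x in G1, or φ(g1 x) = φ(g1) φ(x) for all x in G1. -/
import Mathlib


/-- A multiset `S` over a group `G` is a *product-one sequence* if its terms can be
ordered so that their product is `1`. -/
def IsProductOne {G : Type*} [Group G] (S : Multiset G) : Prop :=
  ∃ l : List G, (l : Multiset G) = S ∧ l.prod = 1

/-- The monoid `B(G)` of product-one sequences over `G`, as a submonoid of the free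
abelian monoid (finite multisets under addition) over `G`. -/
def ProductOneSubmonoid (G : Type*) [Group G] : AddSubmonoid (Multiset G) where
  carrier := {S | IsProductOne S}
  zero_mem' := ⟨[], rfl, rfl⟩
  add_mem' := by
    rintro a b ⟨l1, rfl, p1⟩ ⟨l2, rfl, p2⟩
    exact ⟨l1 ++ l2, by simp, by simp [p1, p2]⟩

section Aux
variable {G : Type*} [Group G]

lemma isProductOne_cons {a : G} {S : Multiset G} (h : IsProductOne (a ::ₘ S)) :
    ∃ l : List G, (l : Multiset G) = S ∧ a * l.prod = 1 := by
  obtain ⟨l₀, hl, hp⟩ := h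
  have ha : a ∈ l₀ := by
    have : a ∈ (l₀ : Multiset G) := hl ▸ Multiset.mem_cons_self a S
    simpa using this
  obtain ⟨l₁, l₂, rfl⟩ := List.append_of_mem ha
  refine ⟨l₂ ++ l₁, ?_, ?_⟩
  · have h2 : a ::ₘ ((l₂ : List G) ++ l₁ : Multiset G) = a ::ₘ S := by
      rw [← hl]
      have : (a :: (l₂ ++ l₁) : List G).Perm (l₁ ++ a :: l₂) := by
        refine List.Perm.trans ?_ List.perm_middle.symm
        exact List.Perm.cons a (List.perm_append_comm)
      exact_mod_cast Multiset.coe_eq_coe.mpr this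
    exact (Multiset.cons_inj_right a).mp h2
  · have hp' : l₁.prod * (a * l₂.prod) = 1 := by simpa using hp
    have h3 : a * l₂.prod = l₁.prod⁻¹ := eq_inv_of_mul_eq_one_right hp'
    rw [List.prod_append, ← mul_assoc, h3, inv_mul_cancel]

lemma coe_eq_pair {b c : G} {l : List G} (h : (l : Multiset G) = {b, c}) :
    l = [b, c] ∨ l = [c, b] := by
  have hp : l.Perm [b, c] := Multiset.coe_eq_coe.mp (h.trans (by rfl))
  match l, hp.length_eq, hp with
  | [x, y], _, hp =>
    have hx : x ∈ [b, c] := hp.subset (by simp)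
    rcases List.mem_pair.mp hx with rfl | rfl
    · have : [y].Perm [c] := hp.cons_inv
      exact Or.inl (by rw [List.perm_singleton.mp this])
    · have hswap : ([b, x] : List G).Perm [x, b] := List.Perm.swap x b []
      have : [y].Perm [b] := (hp.trans hswap).cons_inv
      exact Or.inr (by rw [List.perm_singleton.mp this])

lemma prodOne_pair {a b : G} (h : IsProductOne {a, b}) : a * b = 1 := by
  rw [show ({a, b} : Multiset G) = a ::ₘ {b} from rfl] at h
  obtain ⟨l, hl, hp⟩ := isProductOne_cons h
  rw [Multiset.coe_eq_singleton.mp hl] at hp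
  simpa using hp

lemma prodOne_triple {a b c : G} (h : IsProductOne {a, b, c}) :
    a * (b * c) = 1 ∨ a * (c * b) = 1 := by
  rw [show ({a, b, c} : Multiset G) = a ::ₘ {b, c} from rfl] at h
  obtain ⟨l, hl, hp⟩ := isProductOne_cons h
  rcases coe_eq_pair hl with rfl | rfl
  · left; simpa [mul_assoc] using hp
  · right; simpa [mul_assoc] using hp

end Aux

section Semi
variable {H K : Type*} [Group H] [Group K] (f : H → K)
  (hf : ∀ S : Multiset H, IsProductOne S → IsProductOne (S.map f))

include hf

lemma map_inv_of (a : H) : f a⁻¹ = (f a)⁻¹ := by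
  have h1 : IsProductOne ({a, a⁻¹} : Multiset H) := ⟨[a, a⁻¹], rfl, by simp⟩
  have h2 := hf _ h1
  rw [show ({a, a⁻¹} : Multiset H).map f = {f a, f a⁻¹} by simp] at h2
  exact eq_inv_of_mul_eq_one_right (prodOne_pair h2)

lemma semi_of (a b : H) : f (a * b) = f a * f b ∨ f (a * b) = f b * f a := by
  have h1 : IsProductOne ({a, b, (a * b)⁻¹} : Multiset H) :=
    ⟨[a, b, (a * b)⁻¹], rfl, by simp [mul_assoc]⟩
  have h2 := hf _ h1
  rw [show ({a, b, (a * b)⁻¹} : Multiset H).map f = {f a, f b, f (a * b)⁻¹} by simp,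
    map_inv_of f hf] at h2
  rcases prodOne_triple h2 with h3 | h3
  · left
    rw [← mul_assoc] at h3
    exact (mul_inv_eq_one.mp h3).symm
  · right
    have h4 : (f (a * b))⁻¹ * f b = (f a)⁻¹ := eq_inv_of_mul_eq_one_right h3
    have h5 : (f (a * b))⁻¹ = (f a)⁻¹ * (f b)⁻¹ := eq_mul_inv_of_mul_eq h4
    calc f (a * b) = ((f (a * b))⁻¹)⁻¹ := (inv_inv _).symm
      _ = ((f a)⁻¹ * (f b)⁻¹)⁻¹ := by rw [h5]
      _ = f b * f a := by simp

end Semi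

lemma commTransfer {H K : Type*} [Group H] [Group K] (f : H → K) (e : K → H)
    (hfe : ∀ y, f (e y) = y) (hef : ∀ x, e (f x) = x)
    (hsemi : ∀ a b : K, e (a * b) = e a * e b ∨ e (a * b) = e b * e a)
    {a b : H} (hab : a * b = b * a) : f a * f b = f b * f a := by
  have h1 : e (f a * f b) = a * b := by
    rcases hsemi (f a) (f b) with h | h <;> rw [h, hef, hef]
    exact hab.symm
  have h2 : e (f b * f a) = a * b := by
    rcases hsemi (f b) (f a) with h | h <;> rw [h, hef, hef]
    · exact hab.symm
  calc f a * f b = f (e (f a * f b)) := (hfe _).symm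
    _ = f (e (f b * f a)) := by rw [h1, h2]
    _ = f b * f a := hfe _

theorem A7_pointwise (G1 G2 : Type*) [Group G1] [Group G2]
    (htor : ∀ g : G1, IsOfFinOrder g) (φ : G1 → G2) (hbij : Function.Bijective φ)
    (h : ∀ S : Multiset G1, IsProductOne S ↔ IsProductOne (S.map φ)) :
    ∀ g1 : G1, (∀ x : G1, φ (g1 * x) = φ x * φ g1) ∨
      (∀ x : G1, φ (g1 * x) = φ g1 * φ x) := by
  classical
  set E := Equiv.ofBijective φ hbij with hE
  set ψ : G2 → G1 := fun y => E.symm y with hψ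
  have hφψ : ∀ y, φ (ψ y) = y := fun y => E.apply_symm_apply y
  have hψφ : ∀ x, ψ (φ x) = x := fun x => E.symm_apply_apply x
  have hφmap : ∀ S : Multiset G1, IsProductOne S → IsProductOne (S.map φ) :=
    fun S hS => (h S).mp hS
  have hψmap : ∀ T : Multiset G2, IsProductOne T → IsProductOne (T.map ψ) := by
    intro T hT
    have hTT : (T.map ψ).map φ = T := by
      rw [Multiset.map_map]
      simpa using Multiset.map_congr rfl (fun y _ => hφψ y) |>.trans (Multiset.map_id T)
    exact (h (T.map ψ)).mpr (by rwa [hTT])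
  have semiφ := semi_of φ hφmap
  have semiψ := semi_of ψ hψmap
  have commF : ∀ {a b : G1}, a * b = b * a → φ a * φ b = φ b * φ a :=
    fun hab => commTransfer φ ψ hφψ hψφ semiψ hab
  have commB : ∀ {a b : G1}, φ a * φ b = φ b * φ a → a * b = b * a := by
    intro a b hab
    have := commTransfer ψ φ hψφ hφψ semiφ hab
    simpa [hψφ] using this
  intro g
  by_contra hcon
  push_neg at hcon
  obtain ⟨⟨p, hpne⟩, ⟨q, hqne⟩⟩ := hcon
  have hp : φ (g * p) = φ g * φ p := (semiφ g p).resolve_right hpne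
  have hps : φ g * φ p ≠ φ p * φ g := fun e => hpne (hp.trans e)
  have hq : φ (g * q) = φ q * φ g := (semiφ g q).resolve_left hqne
  have hqs : φ g * φ q ≠ φ q * φ g := fun e => hqne (hq.trans e.symm)
  -- Lemma A
  have lemA : ∀ p q : G1, φ (g * p) = φ g * φ p → φ g * φ p ≠ φ p * φ g →
      φ (g * q) = φ q * φ g → φ g * φ q ≠ φ q * φ g → φ p * φ q = φ q * φ p := by
    intro p q hp hps hq hqs
    have hqg : φ (q * g) = φ g * φ q := by
      rcases semiφ q g with h1 | h1
      · exfalso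
        have hq2 : q * g = g * q := hbij.injective (by rw [h1, hq])
        exact hqs (commF hq2.symm)
      · exact h1
    rcases semiφ q (g * p) with hv1 | hv1 <;> rcases semiφ (q * g) p with hv2 | hv2 <;>
      rw [hp] at hv1 <;> rw [mul_assoc q g p, hqg] at hv2
    · -- hv1 : X = B*(u*A), hv2 : X = (u*B)*A
      exfalso
      have hE := hv1.symm.trans hv2
      simp only [← mul_assoc] at hE
      exact hqs (mul_right_cancel hE).symm
    · -- hv1 : X = B*(u*A), hv2 : X = A*(u*B)  (the † case)
      exfalso
      have hdag := hv1.symm.trans hv2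
      rcases semiφ g (q * (g * p)) with hw1 | hw1 <;>
        rcases semiφ (g * q) (g * p) with hw2 | hw2 <;>
        rw [hv1] at hw1 <;> rw [mul_assoc g q (g * p), hq, hp] at hw2
      · have hE := hw1.symm.trans hw2
        simp only [← mul_assoc] at hE
        exact hqs (mul_right_cancel (mul_right_cancel hE))
      · have hE := hw1.symm.trans hw2
        simp only [mul_assoc] at hE hdag
        have h6 : φ q * (φ g * φ p) = φ p * (φ q * φ g) := mul_left_cancel hE
        have h7 : φ p * (φ q * φ g) = φ p * (φ g * φ q) := h6.symm.trans hdag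
        exact hqs (mul_left_cancel h7).symm
      · have hE := hw1.symm.trans hw2
        simp only [mul_assoc] at hE
        exact hps (mul_left_cancel (mul_left_cancel hE)).symm
      · have hE := hw1.symm.trans hw2
        simp only [← mul_assoc] at hE hdag
        have h6 : φ q * φ g * φ p = φ g * φ p * φ q := mul_right_cancel hE
        have h7 : φ g * φ p * φ q = φ p * φ g * φ q := h6.symm.trans hdag
        exact hps (mul_right_cancel h7)
    · -- hv1 : X = (u*A)*B, hv2 : X = (u*B)*A : gives the goal
      have hE := hv1.symm.trans hv2
      simp only [mul_assoc] at hE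
      exact mul_left_cancel hE
    · -- hv1 : X = (u*A)*B, hv2 : X = A*(u*B)
      exfalso
      have hE := hv1.symm.trans hv2
      simp only [← mul_assoc] at hE
      exact hps (mul_right_cancel hE)
  -- Lemma B
  have hgg : φ (g * g) = φ g * φ g := by rcases semiφ g g with h1 | h1 <;> exact h1
  have lemB1 : φ (g * (g * p)) = φ g * φ (g * p) := by
    rcases semiφ g (g * p) with h1 | h1
    · exact h1
    · exfalso
      rcases semiφ (g * g) p with h2 | h2 <;> rw [mul_assoc g g p, hgg] at h2 <;>
        rw [hp] at h1
      · have hE := h1.symm.trans h2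
        simp only [mul_assoc] at hE
        exact hps (mul_left_cancel hE).symm
      · have hE := h1.symm.trans h2
        simp only [← mul_assoc] at hE
        exact hps (mul_right_cancel hE)
  have lemB2 : φ g * φ (g * p) ≠ φ (g * p) * φ g := by
    intro hE
    rw [hp] at hE
    simp only [mul_assoc] at hE
    exact hps (mul_left_cancel hE)
  -- Final assembly
  have h1 := lemA p q hp hps hq hqs
  have hpq : p * q = q * p := commB h1
  have h2 := lemA (g * p) q lemB1 lemB2 hq hqs
  have hgpq : (g * p) * q = q * (g * p) := commB h2
  have key : (g * q) * p = (q * g) * p := by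
    calc (g * q) * p = g * (q * p) := mul_assoc _ _ _
      _ = g * (p * q) := by rw [hpq]
      _ = (g * p) * q := (mul_assoc _ _ _).symm
      _ = q * (g * p) := hgpq
      _ = (q * g) * p := (mul_assoc _ _ _).symm
  exact hqs (commF (mul_right_cancel key))
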